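/- Assume in addition that |J_t x| = |t|·|x| for all x ∈ ℝ^{2n} and t ∈ ℝ^m (the H-type condition). Then for every α > 0 and every (x,t) ∈ G*: V_α(x,t) = (1/4) α² N(x,t)^{2α−4} |x|² − (1/2) α (Q + α − 2) N(x,t)^{α−4} |x|², where Q := 2n + 2m is the homogeneous dimension of G. -/

import Mathlib

open MeasureTheory Filter
open scoped BigOperators ENNReal NNReal

noncomputable section

/-- Points of the Métivier group `G = ℝ^{2n} × ℝ^m`. -/
abbrev GrpPt (n m : ℕ) := (Fin (2*n) → ℝ) × (Fin m → ℝ)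

/-- Euclidean norm on `Fin k → ℝ`. -/
def e2norm {k : ℕ} (x : Fin k → ℝ) : ℝ := Real.sqrt (∑ i, (x i)^2)

/-- Kaplan norm `N(x,t) = (|x|^4 + 16|t|^2)^(1/4)`. -/
def kN {n m : ℕ} (p : GrpPt n m) : ℝ := (e2norm p.1 ^ 4 + 16 * e2norm p.2 ^ 2) ^ ((1:ℝ)/4)

/-- Group multiplication of the Métivier group. -/
def gmul {n m : ℕ} (J : Fin m → Matrix (Fin (2*n)) (Fin (2*n)) ℝ) (p q : GrpPt n m) : GrpPt n m :=
  (p.1 + q.1, p.2 + q.2 + fun k => (1/2 : ℝ) * ∑ i, (J k).mulVec p.1 i * q.1 i)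

/-- Horizontal left-invariant vector field `X_j`. -/
def XD {n m : ℕ} (J : Fin m → Matrix (Fin (2*n)) (Fin (2*n)) ℝ)
    {E : Type*} [NormedAddCommGroup E] [NormedSpace ℝ E]
    (j : Fin (2*n)) (f : GrpPt n m → E) (p : GrpPt n m) : E :=
  fderiv ℝ f p (Pi.single j 1, 0)
    + (1/2 : ℝ) • ∑ k, ((J k).mulVec p.1 j) • fderiv ℝ f p (0, Pi.single k 1)

/-- Squared length of the horizontal gradient. -/
def gradSq {n m : ℕ} (J : Fin m → Matrix (Fin (2*n)) (Fin (2*n)) ℝ)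
    (f : GrpPt n m → ℝ) (p : GrpPt n m) : ℝ := ∑ j, (XD J j f p)^2

/-- Sub-Laplacian `L f = -∑ X_j (X_j f)`. -/
def LSub {n m : ℕ} (J : Fin m → Matrix (Fin (2*n)) (Fin (2*n)) ℝ)
    {E : Type*} [NormedAddCommGroup E] [NormedSpace ℝ E]
    (f : GrpPt n m → E) (p : GrpPt n m) : E := - ∑ j, XD J j (XD J j f) p

/-- Weight `w_α = exp (-N^α)`. -/
def wA {n m : ℕ} (α : ℝ) (p : GrpPt n m) : ℝ := Real.exp (-(kN p ^ α))

/-- Potential `V_α = -(1/4) |grad w_α|²/w_α² - (1/2) (L w_α)/w_α`. -/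
def VA {n m : ℕ} (J : Fin m → Matrix (Fin (2*n)) (Fin (2*n)) ℝ) (α : ℝ) (p : GrpPt n m) : ℝ :=
  -(1/4) * gradSq J (wA α) p / (wA α p)^2 - (1/2) * LSub J (wA α) p / wA α p

def S1 (p : GrpPt n m) : ℝ := ∑ i, (p.1 i)^2
def S2 (p : GrpPt n m) : ℝ := ∑ k, (p.2 k)^2
def rr (p : GrpPt n m) : ℝ := (S1 p)^2 + 16 * S2 p
def dirD (a : Fin (2*n) → ℝ) (b : Fin m → ℝ) : GrpPt n m →L[ℝ] ℝ :=
  (∑ i, a i • (ContinuousLinearMap.proj i).comp (ContinuousLinearMap.fst ℝ _ _))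
  + (∑ k, b k • (ContinuousLinearMap.proj k).comp (ContinuousLinearMap.snd ℝ _ _))
lemma dirD_apply (a : Fin (2*n) → ℝ) (b : Fin m → ℝ) (v : GrpPt n m) :
    dirD a b v = (∑ i, a i * v.1 i) + ∑ k, b k * v.2 k := by
  simp [dirD, ContinuousLinearMap.sum_apply, smul_eq_mul]

lemma dirD_e1 (a : Fin (2*n) → ℝ) (b : Fin m → ℝ) (j : Fin (2*n)) :
    dirD a b (Pi.single j 1, 0) = a j := by
  rw [dirD_apply]
  simp [Pi.single_apply]

lemma dirD_e2 (a : Fin (2*n) → ℝ) (b : Fin m → ℝ) (k : Fin m) :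
    dirD a b (0, Pi.single k 1) = b k := by
  rw [dirD_apply]
  simp [Pi.single_apply]

-- coordinate functions
lemma hasFDerivAt_x1 (i : Fin (2*n)) (p : GrpPt n m) :
    HasFDerivAt (fun q : GrpPt n m => q.1 i)
      ((ContinuousLinearMap.proj i).comp (ContinuousLinearMap.fst ℝ (Fin (2*n) → ℝ) (Fin m → ℝ))) p := by
  exact ((ContinuousLinearMap.proj i).comp (ContinuousLinearMap.fst ℝ (Fin (2*n) → ℝ) (Fin m → ℝ))).hasFDerivAt (x := p)

lemma hasFDerivAt_x2 (k : Fin m) (p : GrpPt n m) :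
    HasFDerivAt (fun q : GrpPt n m => q.2 k)
      ((ContinuousLinearMap.proj k).comp (ContinuousLinearMap.snd ℝ (Fin (2*n) → ℝ) (Fin m → ℝ))) p := by
  exact ((ContinuousLinearMap.proj k).comp (ContinuousLinearMap.snd ℝ (Fin (2*n) → ℝ) (Fin m → ℝ))).hasFDerivAt (x := p)

lemma clm_eq_dirD (D : GrpPt n m →L[ℝ] ℝ) (a : Fin (2*n) → ℝ) (b : Fin m → ℝ)
    (h : ∀ v : GrpPt n m, D v = (∑ i, a i * v.1 i) + ∑ k, b k * v.2 k) : D = dirD a b :=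
  ContinuousLinearMap.ext fun v => by rw [h v, dirD_apply]

lemma hS1 (p : GrpPt n m) : HasFDerivAt S1 (dirD (fun i => 2*p.1 i) 0) p := by
  have h : HasFDerivAt S1
      (∑ i, (2 * p.1 i ^ 1) • ((ContinuousLinearMap.proj i).comp (ContinuousLinearMap.fst ℝ (Fin (2*n) → ℝ) (Fin m → ℝ)))) p :=
    HasFDerivAt.fun_sum fun i _ => by
      simpa [Function.comp_def] using (hasDerivAt_pow 2 (p.1 i)).comp_hasFDerivAt p (hasFDerivAt_x1 i p)
  have e : (∑ i, (2 * p.1 i ^ 1) • ((ContinuousLinearMap.proj i).comp (ContinuousLinearMap.fst ℝ (Fin (2*n) → ℝ) (Fin m → ℝ))))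
      = dirD (fun i => 2*p.1 i) 0 := by
    refine clm_eq_dirD _ _ _ (fun v => ?_)
    simp [ContinuousLinearMap.sum_apply, smul_eq_mul]
  exact e ▸ h

lemma hS2 (p : GrpPt n m) : HasFDerivAt S2 (dirD 0 (fun k => 2*p.2 k)) p := by
  have h : HasFDerivAt S2
      (∑ k, (2 * p.2 k ^ 1) • ((ContinuousLinearMap.proj k).comp (ContinuousLinearMap.snd ℝ (Fin (2*n) → ℝ) (Fin m → ℝ)))) p :=
    HasFDerivAt.fun_sum fun k _ => by
      simpa [Function.comp_def] using (hasDerivAt_pow 2 (p.2 k)).comp_hasFDerivAt p (hasFDerivAt_x2 k p)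
  have e : (∑ k, (2 * p.2 k ^ 1) • ((ContinuousLinearMap.proj k).comp (ContinuousLinearMap.snd ℝ (Fin (2*n) → ℝ) (Fin m → ℝ))))
      = dirD 0 (fun k => 2*p.2 k) := by
    refine clm_eq_dirD _ _ _ (fun v => ?_)
    simp [ContinuousLinearMap.sum_apply, smul_eq_mul]
  exact e ▸ h

lemma hrr (p : GrpPt n m) :
    HasFDerivAt rr (dirD (fun i => 4*S1 p*p.1 i) (fun k => 32*p.2 k)) p := by
  have h1 : HasFDerivAt (fun q : GrpPt n m => (S1 q)^2) ((2 * S1 p ^ 1) • dirD (fun i => 2*p.1 i) 0) p :=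
    (hasDerivAt_pow 2 (S1 p)).comp_hasFDerivAt p (hS1 p)
  have h : HasFDerivAt rr ((2 * S1 p ^ 1) • dirD (fun i => 2*p.1 i) 0
      + (16:ℝ) • dirD 0 (fun k => 2*p.2 k)) p := h1.add ((hS2 p).const_mul 16)
  have e : (2 * S1 p ^ 1) • dirD (fun i => 2*p.1 i) 0 + (16:ℝ) • dirD 0 (fun k => 2*p.2 k)
      = dirD (fun i => 4*S1 p*p.1 i) (fun k => 32*p.2 k) := by
    refine clm_eq_dirD _ _ _ (fun v => ?_)
    simp only [ContinuousLinearMap.add_apply, ContinuousLinearMap.smul_apply, dirD_apply,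
      smul_eq_mul, Finset.mul_sum, Pi.zero_apply, zero_mul, Finset.sum_const_zero, add_zero,
      zero_add, mul_add]
    congr 1 <;> apply Finset.sum_congr rfl <;> intro i _ <;> ring
  exact e ▸ h

def DrrD (p : GrpPt n m) : GrpPt n m →L[ℝ] ℝ := dirD (fun i => 4*S1 p*p.1 i) (fun k => 32*p.2 k)
def ww (γ : ℝ) (p : GrpPt n m) : ℝ := Real.exp (-(rr p ^ γ))
def cc (γ : ℝ) (p : GrpPt n m) : ℝ := γ * rr p ^ (γ-1) * Real.exp (-(rr p ^ γ))
def KK (γ : ℝ) (p : GrpPt n m) : ℝ :=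
  γ * ((γ-1) * rr p ^ (γ-2) - γ * rr p ^ (2*γ-2)) * Real.exp (-(rr p ^ γ))
def PP (J : Fin m → Matrix (Fin (2*n)) (Fin (2*n)) ℝ) (j : Fin (2*n)) (p : GrpPt n m) : ℝ :=
  4 * S1 p * p.1 j + 16 * ∑ k, p.2 k * (J k).mulVec p.1 j

lemma hrpow (γ : ℝ) (p : GrpPt n m) (hp : rr p ≠ 0) :
    HasFDerivAt (fun q => rr q ^ γ) ((γ * rr p ^ (γ-1)) • DrrD p) p :=
  (Real.hasDerivAt_rpow_const (Or.inl hp)).comp_hasFDerivAt p (hrr p)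

lemma hww (γ : ℝ) (p : GrpPt n m) (hp : rr p ≠ 0) :
    HasFDerivAt (ww γ) ((-(cc γ p)) • DrrD p) p := by
  have h := (Real.hasDerivAt_exp (-(rr p ^ γ))).comp_hasFDerivAt p (hrpow γ p hp).neg
  have e : Real.exp (-(rr p ^ γ)) • (-((γ * rr p ^ (γ-1)) • DrrD p)) = (-(cc γ p)) • DrrD p := by
    have hs : Real.exp (-(rr p ^ γ)) * (γ * rr p ^ (γ-1)) = cc γ p := by unfold cc; ring
    rw [smul_neg, smul_smul, hs]
    exact (neg_smul _ _).symm
  exact e ▸ h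

lemma hcc (γ : ℝ) (p : GrpPt n m) (hp0 : 0 < rr p) :
    HasFDerivAt (cc γ) (KK γ p • DrrD p) p := by
  have hp : rr p ≠ 0 := ne_of_gt hp0
  have hf : HasFDerivAt (fun q => rr q ^ (γ-1)) (((γ-1) * rr p ^ (γ-1-1)) • DrrD p) p :=
    hrpow (γ-1) p hp
  have h := ((hf.mul (hww γ p hp)).const_mul γ)
  have e : γ • (rr p ^ (γ-1) • ((-(cc γ p)) • DrrD p) + ww γ p • (((γ-1) * rr p ^ (γ-1-1)) • DrrD p))
      = KK γ p • DrrD p := by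
    rw [smul_smul, smul_smul, ← add_smul, smul_smul]
    congr 1
    have h1 : rr p ^ (γ-1) * rr p ^ (γ-1) = rr p ^ (2*γ-2) := by
      rw [← Real.rpow_add hp0]; ring_nf
    unfold cc KK ww
    rw [show γ-1-1 = γ-2 by ring]
    linear_combination (-(γ^2) * Real.exp (-(rr p ^ γ))) * h1
  have e2 : (fun q : GrpPt n m => γ * (rr q ^ (γ-1) * ww γ q)) = cc γ := by
    funext q; unfold cc ww; ring
  rw [← e2, ← e]
  exact h

lemma hLk (J : Fin m → Matrix (Fin (2*n)) (Fin (2*n)) ℝ) (k : Fin m) (j : Fin (2*n)) (p : GrpPt n m) :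
    HasFDerivAt (fun q : GrpPt n m => (J k).mulVec q.1 j) (dirD (fun i => J k j i) 0) p := by
  have h : HasFDerivAt (fun q : GrpPt n m => ∑ i, J k j i * q.1 i)
      (∑ i, J k j i • ((ContinuousLinearMap.proj i).comp (ContinuousLinearMap.fst ℝ (Fin (2*n) → ℝ) (Fin m → ℝ)))) p :=
    HasFDerivAt.fun_sum fun i _ => (hasFDerivAt_x1 i p).const_mul (J k j i)
  have efun : (fun q : GrpPt n m => ∑ i, J k j i * q.1 i) = (fun q : GrpPt n m => (J k).mulVec q.1 j) := by
    funext q; simp [Matrix.mulVec, dotProduct]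
  have e : (∑ i, J k j i • ((ContinuousLinearMap.proj i).comp (ContinuousLinearMap.fst ℝ (Fin (2*n) → ℝ) (Fin m → ℝ))))
      = dirD (fun i => J k j i) 0 := by
    refine clm_eq_dirD _ _ _ (fun v => ?_)
    simp [ContinuousLinearMap.sum_apply, smul_eq_mul]
  rw [efun, e] at h
  exact h

lemma hPP (J : Fin m → Matrix (Fin (2*n)) (Fin (2*n)) ℝ) (j : Fin (2*n)) (p : GrpPt n m) :
    HasFDerivAt (PP J j)
      (dirD (fun i => 8*p.1 i*p.1 j + (if i = j then 4*S1 p else 0) + 16*∑ k, p.2 k * J k j i)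
            (fun k => 16*(J k).mulVec p.1 j)) p := by
  have hA : HasFDerivAt (fun q : GrpPt n m => 4 * S1 q * q.1 j)
      ((4 * S1 p) • ((ContinuousLinearMap.proj j).comp (ContinuousLinearMap.fst ℝ (Fin (2*n) → ℝ) (Fin m → ℝ)))
        + p.1 j • ((4:ℝ) • dirD (fun i => 2*p.1 i) 0)) p :=
    HasFDerivAt.mul ((hS1 p).const_mul 4) (hasFDerivAt_x1 j p)
  have hB : HasFDerivAt (fun q : GrpPt n m => ∑ k, q.2 k * (J k).mulVec q.1 j)
      (∑ k, (p.2 k • dirD (fun i => J k j i) 0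
        + ((J k).mulVec p.1 j) • ((ContinuousLinearMap.proj k).comp (ContinuousLinearMap.snd ℝ (Fin (2*n) → ℝ) (Fin m → ℝ))))) p :=
    HasFDerivAt.fun_sum fun k _ => HasFDerivAt.mul (hasFDerivAt_x2 k p) (hLk J k j p)
  have h := hA.add (hB.const_mul 16)
  have e : ((4 * S1 p) • ((ContinuousLinearMap.proj j).comp (ContinuousLinearMap.fst ℝ (Fin (2*n) → ℝ) (Fin m → ℝ)))
        + p.1 j • ((4:ℝ) • dirD (fun i => 2*p.1 i) 0))
      + (16:ℝ) • (∑ k, (p.2 k • dirD (fun i => J k j i) 0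
        + ((J k).mulVec p.1 j) • ((ContinuousLinearMap.proj k).comp (ContinuousLinearMap.snd ℝ (Fin (2*n) → ℝ) (Fin m → ℝ)))))
      = dirD (fun i => 8*p.1 i*p.1 j + (if i = j then 4*S1 p else 0) + 16*∑ k, p.2 k * J k j i)
            (fun k => 16*(J k).mulVec p.1 j) := by
    refine clm_eq_dirD _ _ _ (fun v => ?_)
    simp only [ContinuousLinearMap.add_apply, ContinuousLinearMap.smul_apply,
      ContinuousLinearMap.sum_apply, ContinuousLinearMap.coe_comp', Function.comp_apply,
      ContinuousLinearMap.coe_fst', ContinuousLinearMap.coe_snd',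
      ContinuousLinearMap.proj_apply, dirD_apply, smul_eq_mul, Pi.zero_apply, zero_mul,
      Finset.sum_const_zero, add_zero, zero_add]
    have h1 : ∑ i, ((8*p.1 i*p.1 j + if i = j then 4*S1 p else 0) + 16*∑ k, p.2 k * J k j i) * v.1 i
        = ((∑ i, 8*p.1 i*p.1 j*v.1 i) + 4*S1 p*v.1 j) + ∑ i, (16*∑ k, p.2 k * J k j i) * v.1 i := by
      simp only [add_mul, Finset.sum_add_distrib, ite_mul, zero_mul]
      congr 2
      rw [Finset.sum_eq_single j]
      · simp
      · intro b _ hb; simp [hb]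
      · intro hj; exact absurd (Finset.mem_univ j) hj
    have h2 : ∑ i, (16*∑ k, p.2 k * J k j i) * v.1 i
        = 16 * ∑ k, p.2 k * ∑ i, J k j i * v.1 i := by
      simp only [Finset.mul_sum, Finset.sum_mul]
      rw [Finset.sum_comm]
      exact Finset.sum_congr rfl fun k _ => Finset.sum_congr rfl fun i _ => by ring
    have h3 : p.1 j * (4*∑ i, 2*p.1 i*v.1 i) = ∑ i, 8*p.1 i*p.1 j*v.1 i := by
      rw [Finset.mul_sum, Finset.mul_sum]
      exact Finset.sum_congr rfl fun i _ => by ring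
    have h4 : (16:ℝ)*∑ k, (J k).mulVec p.1 j * v.2 k = ∑ k, 16*(J k).mulVec p.1 j*v.2 k := by
      rw [Finset.mul_sum]
      exact Finset.sum_congr rfl fun k' _ => by ring
    rw [h1, h2, Finset.sum_add_distrib, mul_add, ← h3]
    have e5 : ∑ x, p.1 x * v.1 x * 2 = ∑ x, 2 * p.1 x * v.1 x :=
      Finset.sum_congr rfl fun i _ => by ring
    have e6 : (∑ x, (J x).mulVec p.1 j * v.2 x) * 16 = ∑ x, 16*(J x).mulVec p.1 j * v.2 x := by
      rw [Finset.sum_mul]; exact Finset.sum_congr rfl fun k' _ => by ring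
    ring_nf
    rw [e5, e6]
    congr 1; exact Finset.sum_congr rfl fun k' _ => by ring
  rw [e] at h
  exact h

lemma XD_w (γ : ℝ) (J : Fin m → Matrix (Fin (2*n)) (Fin (2*n)) ℝ) (j : Fin (2*n))
    (p : GrpPt n m) (hp : rr p ≠ 0) :
    XD J j (ww γ) p = -(cc γ p) * PP J j p := by
  have hdef : XD J j (ww γ) p = fderiv ℝ (ww γ) p (Pi.single j 1, 0)
      + (1/2 : ℝ) • ∑ k, ((J k).mulVec p.1 j) • fderiv ℝ (ww γ) p (0, Pi.single k 1) := rfl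
  rw [hdef, (hww γ p hp).fderiv]
  simp only [ContinuousLinearMap.smul_apply, DrrD, dirD_e1, dirD_e2, smul_eq_mul]
  unfold PP
  have e : ∑ k, (J k).mulVec p.1 j * (-cc γ p * (32 * p.2 k))
      = -cc γ p * (32 * ∑ k, p.2 k * (J k).mulVec p.1 j) := by
    simp only [Finset.mul_sum]
    exact Finset.sum_congr rfl fun k _ => by ring
  rw [e]; ring

lemma hgg (γ : ℝ) (J : Fin m → Matrix (Fin (2*n)) (Fin (2*n)) ℝ) (j : Fin (2*n))
    (p : GrpPt n m) (hp0 : 0 < rr p) :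
    HasFDerivAt (fun q => -(cc γ q) * PP J j q)
      ((-(cc γ p)) • (dirD (fun i => 8*p.1 i*p.1 j + (if i = j then 4*S1 p else 0) + 16*∑ k, p.2 k * J k j i)
            (fun k => 16*(J k).mulVec p.1 j))
        + PP J j p • (-(KK γ p • DrrD p))) p :=
  HasFDerivAt.mul ((hcc γ p hp0).neg) (hPP J j p)

lemma rr_cont : Continuous (rr : GrpPt n m → ℝ) := by
  have h1 : Continuous (S1 : GrpPt n m → ℝ) :=
    continuous_finset_sum _ fun i _ => ((continuous_apply i).comp continuous_fst).pow 2
  have h2 : Continuous (S2 : GrpPt n m → ℝ) :=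
    continuous_finset_sum _ fun k _ => ((continuous_apply k).comp continuous_snd).pow 2
  exact (h1.pow 2).add (continuous_const.mul h2)

lemma XD_XD_w (γ : ℝ) (J : Fin m → Matrix (Fin (2*n)) (Fin (2*n)) ℝ) (j : Fin (2*n))
    (p : GrpPt n m) (hp0 : 0 < rr p) :
    XD J j (XD J j (ww γ)) p
      = -(KK γ p) * (PP J j p)^2
        - cc γ p * (8*(p.1 j)^2 + 4*S1 p + 16*∑ k, p.2 k * J k j j)
        - 8 * cc γ p * ∑ k, ((J k).mulVec p.1 j)^2 := by
  have hU : {q : GrpPt n m | 0 < rr q} ∈ nhds p :=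
    (isOpen_lt continuous_const rr_cont).mem_nhds hp0
  have heq : XD J j (ww γ) =ᶠ[nhds p] (fun q => -(cc γ q) * PP J j q) :=
    Filter.eventuallyEq_of_mem hU fun q hq => XD_w γ J j q (ne_of_gt hq)
  have hfd : fderiv ℝ (XD J j (ww γ)) p = fderiv ℝ (fun q => -(cc γ q) * PP J j q) p :=
    heq.fderiv_eq
  have hdef : XD J j (XD J j (ww γ)) p = fderiv ℝ (XD J j (ww γ)) p (Pi.single j 1, 0)
      + (1/2 : ℝ) • ∑ k, ((J k).mulVec p.1 j) • fderiv ℝ (XD J j (ww γ)) p (0, Pi.single k 1) := rfl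
  rw [hdef, hfd, (hgg γ J j p hp0).fderiv]
  simp only [ContinuousLinearMap.add_apply, ContinuousLinearMap.smul_apply,
    ContinuousLinearMap.neg_apply, DrrD, dirD_e1, dirD_e2, smul_eq_mul,
    eq_self_iff_true, if_true]
  have eS : ∑ k, (J k).mulVec p.1 j *
        (-cc γ p * (16 * (J k).mulVec p.1 j) + PP J j p * -(KK γ p * (32 * p.2 k)))
      = -16*cc γ p * (∑ k, ((J k).mulVec p.1 j)^2)
        - 32*KK γ p*PP J j p*(∑ k, p.2 k * (J k).mulVec p.1 j) := by
    calc ∑ k, (J k).mulVec p.1 j *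
          (-cc γ p * (16 * (J k).mulVec p.1 j) + PP J j p * -(KK γ p * (32 * p.2 k)))
        = ∑ k, (-16*cc γ p * ((J k).mulVec p.1 j)^2
            - 32*KK γ p*PP J j p*(p.2 k * (J k).mulVec p.1 j)) :=
          Finset.sum_congr rfl fun k _ => by ring
      _ = _ := by rw [Finset.sum_sub_distrib, ← Finset.mul_sum, ← Finset.mul_sum]
  rw [eS]
  have e2 : PP J j p = 4 * S1 p * p.1 j + 16 * ∑ k, p.2 k * (J k).mulVec p.1 j := rfl
  linear_combination (KK γ p * PP J j p) * e2

lemma rr_nonneg (p : GrpPt n m) : 0 ≤ rr p := by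
  have h1 : (0:ℝ) ≤ S2 p := Finset.sum_nonneg fun k _ => sq_nonneg _
  have := sq_nonneg (S1 p)
  unfold rr; nlinarith

lemma S1_nonneg (p : GrpPt n m) : 0 ≤ S1 p := Finset.sum_nonneg fun k _ => sq_nonneg _

lemma e2norm_sq (x : Fin k → ℝ) : e2norm x ^ 2 = ∑ i, (x i)^2 :=
  Real.sq_sqrt (Finset.sum_nonneg fun k _ => sq_nonneg _)

lemma kN_eq (p : GrpPt n m) : kN p = rr p ^ ((1:ℝ)/4) := by
  have h4 : e2norm p.1 ^ 4 = (S1 p)^2 := by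
    rw [show (4:ℕ) = 2*2 from rfl, pow_mul, e2norm_sq]; rfl
  rw [kN, h4, e2norm_sq]; rfl

lemma wA_eq (α : ℝ) : (wA α : GrpPt n m → ℝ) = fun p => Real.exp (-(rr p ^ (α/4))) := by
  funext p
  rw [wA, kN_eq, ← Real.rpow_mul (rr_nonneg p)]
  ring_nf

section Sums
variable {n m : ℕ}

lemma skew_pair (A : Matrix (Fin (2*n)) (Fin (2*n)) ℝ) (h : A.transpose = -A) (x : Fin (2*n) → ℝ) :
    ∑ j, x j * A.mulVec x j = 0 := by
  have hA : ∀ i j, A i j = - A j i := by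
    intro i j
    have := congrFun (congrFun h j) i
    simpa [Matrix.transpose_apply] using this
  have h1 : ∑ j, ∑ i, x j * (A j i * x i) = -∑ j, ∑ i, x j * (A i j * x i) := by
    rw [← Finset.sum_neg_distrib]
    refine Finset.sum_congr rfl fun j _ => ?_
    rw [← Finset.sum_neg_distrib]
    refine Finset.sum_congr rfl fun i _ => ?_
    rw [hA j i]; ring
  have h2 : ∑ j, ∑ i, x j * (A i j * x i) = ∑ j, ∑ i, x j * (A j i * x i) := by
    rw [Finset.sum_comm]
    exact Finset.sum_congr rfl fun i _ => Finset.sum_congr rfl fun j _ => by ring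
  have e : (∑ j, x j * A.mulVec x j) = ∑ j, ∑ i, x j * (A j i * x i) :=
    Finset.sum_congr rfl fun j _ => by simp [Matrix.mulVec, dotProduct, Finset.mul_sum]
  rw [e]
  linarith

lemma skew_diag (A : Matrix (Fin (2*n)) (Fin (2*n)) ℝ) (h : A.transpose = -A) (j : Fin (2*n)) :
    A j j = 0 := by
  have := congrFun (congrFun h j) j
  simp only [Matrix.transpose_apply, Matrix.neg_apply] at this
  linarith

lemma single_sq_sum (k : Fin m) : ∑ k', ((Pi.single k 1 : Fin m → ℝ) k')^2 = 1 := by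
  rw [Finset.sum_eq_single k]
  · simp
  · intro b _ hb; simp [Pi.single_apply, hb]
  · intro h; exact absurd (Finset.mem_univ k) h

lemma single_smul_sum (J : Fin m → Matrix (Fin (2*n)) (Fin (2*n)) ℝ) (k : Fin m) :
    (∑ k', (Pi.single k 1 : Fin m → ℝ) k' • J k') = J k := by
  rw [Finset.sum_eq_single k]
  · simp
  · intro b _ hb; simp [Pi.single_apply, hb]
  · intro h; exact absurd (Finset.mem_univ k) h

lemma htype_sq (J : Fin m → Matrix (Fin (2*n)) (Fin (2*n)) ℝ)
    (hHtype : ∀ (x : Fin (2*n) → ℝ) (t : Fin m → ℝ),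
      e2norm ((∑ k, t k • J k).mulVec x) = e2norm t * e2norm x)
    (x : Fin (2*n) → ℝ) (t : Fin m → ℝ) :
    ∑ j, ((∑ k, t k • J k).mulVec x j)^2 = (∑ k, (t k)^2) * ∑ i, (x i)^2 := by
  have h := congrArg (fun s => s^2) (hHtype x t)
  simp only [mul_pow, e2norm_sq] at h
  exact h

lemma sum_Jk_sq (J : Fin m → Matrix (Fin (2*n)) (Fin (2*n)) ℝ)
    (hHtype : ∀ (x : Fin (2*n) → ℝ) (t : Fin m → ℝ),
      e2norm ((∑ k, t k • J k).mulVec x) = e2norm t * e2norm x)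
    (p : GrpPt n m) (k : Fin m) :
    ∑ j, ((J k).mulVec p.1 j)^2 = S1 p := by
  have h := htype_sq J hHtype p.1 (Pi.single k 1)
  rw [single_smul_sum J k] at h
  rw [h, single_sq_sum k, one_mul]; rfl

lemma PP_as_Jt (J : Fin m → Matrix (Fin (2*n)) (Fin (2*n)) ℝ) (p : GrpPt n m) (j : Fin (2*n)) :
    ∑ k, p.2 k * (J k).mulVec p.1 j = (∑ k, p.2 k • J k).mulVec p.1 j := by
  simp only [Matrix.mulVec, dotProduct, Matrix.sum_apply, Matrix.smul_apply,
    smul_eq_mul, Finset.sum_mul, Finset.mul_sum]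
  rw [Finset.sum_comm]
  exact Finset.sum_congr rfl fun i _ => Finset.sum_congr rfl fun k _ => by ring

lemma sum_PP_sq (J : Fin m → Matrix (Fin (2*n)) (Fin (2*n)) ℝ)
    (hskew : ∀ k, (J k).transpose = -(J k))
    (hHtype : ∀ (x : Fin (2*n) → ℝ) (t : Fin m → ℝ),
      e2norm ((∑ k, t k • J k).mulVec x) = e2norm t * e2norm x)
    (p : GrpPt n m) :
    ∑ j, (PP J j p)^2 = 16 * S1 p * rr p := by
  have hJt : (∑ k, p.2 k • J k).transpose = -(∑ k, p.2 k • J k) := by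
    rw [Matrix.transpose_sum]
    rw [← Finset.sum_neg_distrib]
    exact Finset.sum_congr rfl fun k _ => by
      rw [Matrix.transpose_smul, hskew k]; module
  have h0 : ∑ j, p.1 j * (∑ k, p.2 k • J k).mulVec p.1 j = 0 := skew_pair _ hJt p.1
  have h2 : ∑ j, ((∑ k, p.2 k • J k).mulVec p.1 j)^2 = S2 p * S1 p := htype_sq J hHtype p.1 p.2
  have e : ∑ j, (PP J j p)^2
      = ∑ j, (16*(S1 p)^2*(p.1 j)^2 + 128*S1 p*(p.1 j * (∑ k, p.2 k • J k).mulVec p.1 j)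
          + 256*((∑ k, p.2 k • J k).mulVec p.1 j)^2) := by
    refine Finset.sum_congr rfl fun j _ => ?_
    rw [PP, PP_as_Jt J p j]; ring
  rw [e]
  simp only [Finset.sum_add_distrib]
  rw [← Finset.mul_sum, ← Finset.mul_sum, ← Finset.mul_sum, h0, h2]
  have : ∑ j, (p.1 j)^2 = S1 p := rfl
  rw [this]
  unfold rr
  ring

end Sums

variable {n m : ℕ}

lemma wA_eq' (α : ℝ) : (wA α : GrpPt n m → ℝ) = ww (α/4) := (wA_eq α).trans rfl

lemma gradSq_w (J : Fin m → Matrix (Fin (2*n)) (Fin (2*n)) ℝ)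
    (hskew : ∀ k, (J k).transpose = -(J k))
    (hHtype : ∀ (x : Fin (2*n) → ℝ) (t : Fin m → ℝ),
      e2norm ((∑ k, t k • J k).mulVec x) = e2norm t * e2norm x)
    (γ : ℝ) (p : GrpPt n m) (hp0 : 0 < rr p) :
    gradSq J (ww γ) p = 16 * S1 p * rr p * (cc γ p)^2 := by
  unfold gradSq
  calc ∑ j, (XD J j (ww γ) p)^2
      = ∑ j, (cc γ p)^2 * (PP J j p)^2 :=
        Finset.sum_congr rfl fun j _ => by rw [XD_w γ J j p (ne_of_gt hp0)]; ring
    _ = (cc γ p)^2 * ∑ j, (PP J j p)^2 := by rw [Finset.mul_sum]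
    _ = _ := by rw [sum_PP_sq J hskew hHtype p]; ring

lemma LSub_w (J : Fin m → Matrix (Fin (2*n)) (Fin (2*n)) ℝ)
    (hskew : ∀ k, (J k).transpose = -(J k))
    (hHtype : ∀ (x : Fin (2*n) → ℝ) (t : Fin m → ℝ),
      e2norm ((∑ k, t k • J k).mulVec x) = e2norm t * e2norm x)
    (γ : ℝ) (p : GrpPt n m) (hp0 : 0 < rr p) :
    LSub J (ww γ) p = KK γ p * (16*S1 p*rr p) + cc γ p * (8*S1 p)
      + (2*(n:ℝ)) * (cc γ p * (4*S1 p)) + 8*cc γ p * ((m:ℝ)*S1 p) := by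
  have hd : ∀ j, ∑ k, p.2 k * J k j j = 0 := fun j =>
    Finset.sum_eq_zero fun k _ => by rw [skew_diag (J k) (hskew k) j]; ring
  have hA : ∑ j, KK γ p*(PP J j p)^2 = KK γ p*(16*S1 p*rr p) := by
    rw [← Finset.mul_sum, sum_PP_sq J hskew hHtype p]
  have hB : ∑ j, cc γ p*(8*(p.1 j)^2) = cc γ p*(8*S1 p) := by
    rw [← Finset.mul_sum, ← Finset.mul_sum]; rfl
  have hC : ∑ j : Fin (2*n), cc γ p*(4*S1 p) = (2*(n:ℝ))*(cc γ p*(4*S1 p)) := by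
    rw [Finset.sum_const, Finset.card_univ, Fintype.card_fin, nsmul_eq_mul]
    push_cast; ring
  have hD : ∑ j, 8*cc γ p*∑ k, ((J k).mulVec p.1 j)^2 = 8*cc γ p*((m:ℝ)*S1 p) := by
    rw [← Finset.mul_sum, Finset.sum_comm]
    congr 1
    calc ∑ k : Fin m, ∑ j, ((J k).mulVec p.1 j)^2 = ∑ k : Fin m, S1 p :=
          Finset.sum_congr rfl fun k _ => sum_Jk_sq J hHtype p k
      _ = (m:ℝ)*S1 p := by
          rw [Finset.sum_const, Finset.card_univ, Fintype.card_fin, nsmul_eq_mul]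
  calc LSub J (ww γ) p
      = ∑ j, (KK γ p*(PP J j p)^2 + cc γ p*(8*(p.1 j)^2) + cc γ p*(4*S1 p)
          + 8*cc γ p*∑ k, ((J k).mulVec p.1 j)^2) := by
        show -∑ j, XD J j (XD J j (ww γ)) p = _
        rw [← Finset.sum_neg_distrib]
        refine Finset.sum_congr rfl fun j _ => ?_
        rw [XD_XD_w γ J j p hp0, hd j]; ring
    _ = _ := by
        rw [Finset.sum_add_distrib, Finset.sum_add_distrib, Finset.sum_add_distrib,
          hA, hB, hC, hD]

lemma rr_pos (p : GrpPt n m) (hp : p ≠ 0) : 0 < rr p := by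
  rcases lt_or_eq_of_le (rr_nonneg p) with h | h
  · exact h
  · exfalso
    apply hp
    have hS1 : S1 p = 0 := by
      have h1 : (0:ℝ) ≤ S2 p := Finset.sum_nonneg fun k _ => sq_nonneg _
      have h2 : (0:ℝ) ≤ S1 p := S1_nonneg p
      unfold rr at h; nlinarith
    have hS2 : S2 p = 0 := by
      have h2 : (0:ℝ) ≤ S1 p := S1_nonneg p
      unfold rr at h; nlinarith
    have h1 : ∀ i, p.1 i = 0 := by
      intro i
      have := (Finset.sum_eq_zero_iff_of_nonneg (fun i _ => sq_nonneg (p.1 i))).mp hS1.symm.symm i (Finset.mem_univ i)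
      exact pow_eq_zero_iff (two_ne_zero) |>.mp this
    have h2 : ∀ k, p.2 k = 0 := by
      intro k
      have := (Finset.sum_eq_zero_iff_of_nonneg (fun k _ => sq_nonneg (p.2 k))).mp hS2 k (Finset.mem_univ k)
      exact pow_eq_zero_iff (two_ne_zero) |>.mp this
    exact Prod.ext (funext h1) (funext h2)

/-- Explicit formula for `V_α` on H-type groups. -/
theorem potential_Htype (n m : ℕ) (hn : 1 ≤ n) (hm : 1 ≤ m)
    (J : Fin m → Matrix (Fin (2*n)) (Fin (2*n)) ℝ)
    (hskew : ∀ k, (J k).transpose = -(J k))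
    (hMet : ∀ t : Fin m → ℝ, t ≠ 0 → IsUnit (∑ k, t k • J k))
    (hHtype : ∀ (x : Fin (2*n) → ℝ) (t : Fin m → ℝ),
      e2norm ((∑ k, t k • J k).mulVec x) = e2norm t * e2norm x) :
    ∀ α : ℝ, 0 < α → ∀ p : GrpPt n m, p ≠ 0 →
      VA J α p
        = (1/4) * α^2 * kN p ^ (2*α - 4) * e2norm p.1 ^ 2
          - (1/2) * α * ((2*(n:ℝ) + 2*(m:ℝ)) + α - 2) * kN p ^ (α - 4) * e2norm p.1 ^ 2 := by

  intro α hα p hp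
  have hr : 0 < rr p := rr_pos p hp
  have hrne : rr p ≠ 0 := ne_of_gt hr
  have hsq : e2norm p.1 ^ 2 = S1 p := e2norm_sq p.1
  rw [VA, wA_eq' α, gradSq_w J hskew hHtype (α/4) p hr, LSub_w J hskew hHtype (α/4) p hr,
    kN_eq p, hsq, ← Real.rpow_mul (rr_nonneg p), ← Real.rpow_mul (rr_nonneg p)]
  have hE : Real.exp (-(rr p ^ (α/4))) ≠ 0 := Real.exp_ne_zero _
  have e4 : rr p ^ (α/4-1) = rr p * rr p ^ (α/4-2) := by
    rw [show α/4-1 = 1+(α/4-2) by ring, Real.rpow_add hr, Real.rpow_one]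
  have e3 : rr p ^ (2*(α/4)-2) = (rr p * rr p ^ (α/4-2)) * (rr p * rr p ^ (α/4-2)) := by
    rw [show 2*(α/4)-2 = (α/4-1)+(α/4-1) by ring, Real.rpow_add hr, e4]
  have e1 : rr p ^ ((1:ℝ)/4*(2*α-4))
      = rr p * ((rr p * rr p ^ (α/4-2)) * (rr p * rr p ^ (α/4-2))) := by
    rw [show (1:ℝ)/4*(2*α-4) = 1+(2*(α/4)-2) by ring, Real.rpow_add hr, Real.rpow_one, e3]
  have e2 : rr p ^ ((1:ℝ)/4*(α-4)) = rr p * rr p ^ (α/4-2) := by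
    rw [show (1:ℝ)/4*(α-4) = α/4-1 by ring, e4]
  unfold cc KK ww
  rw [e1, e2, e3, e4]
  field_simp
  ring

end
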